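/- Assume y₀ is differentiable on (0,∞) with y₀′(s) = −y₁(s), and assume there is a constant C > 0 such that for all s ≥ 1, |y₀(s) − √(2/(πs))·cos(s − π/4)| ≤ C·s^{−3/2} and |y₁(s) − √(2/(πs))·sin(s − π/4)| ≤ C·s^{−3/2}. Then for every continuous compactly supported f : ℝ² → ℝ, lim_{N→∞} ∬_{ℝ²} f(τ,θ)·(∂P_N/∂τ (τ,θ))·(∂P_N/∂θ (τ,θ)) dτ dθ = 0. That is, the weak limit of the cross product of derivatives (∂_τ P_N)(∂_θ P_N) vanishes. -/

import Mathlib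

/-- The Gowdy wave `P_N(τ,θ) = (A/√N)·y₀(N·e^{−τ})·sin(N·θ)` (in the paper `y₀ = J₀`). -/
noncomputable def P_N (A : ℝ) (y₀ : ℝ → ℝ) (N : ℕ) (τ θ : ℝ) : ℝ :=
  (A / Real.sqrt N) * y₀ ((N : ℝ) * Real.exp (-τ)) * Real.sin ((N : ℝ) * θ)

open Filter MeasureTheory
open scoped FourierTransform

section Helpers

/-- Riemann–Lebesgue for `sin (2 N v)`. -/
lemma rl_sin (g : ℝ → ℝ) (hg : Integrable g) :
    Tendsto (fun N : ℕ => ∫ v : ℝ, g v * Real.sin (2 * (N:ℝ) * v)) atTop (nhds 0) := by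
  have key := Real.tendsto_integral_exp_smul_cocompact (fun v : ℝ => (g v : ℂ))
  have him : ∀ w : ℝ, (∫ v : ℝ, 𝐞 (-(v * w)) • ((g v : ℂ))).im
      = ∫ v : ℝ, g v * Real.sin (2 * Real.pi * (-(v * w))) := by
    intro w
    have hint : Integrable (fun v : ℝ => 𝐞 (-(v * w)) • ((g v : ℂ))) := by
      refine hg.norm.mono' ?_ ?_
      · apply AEStronglyMeasurable.smul _ (Complex.continuous_ofReal.comp_aestronglyMeasurable hg.1)
        apply Continuous.aestronglyMeasurable
        exact continuous_subtype_val.comp (Real.continuous_fourierChar.comp (by fun_prop : Continuous fun v : ℝ => -(v * w)))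
      · filter_upwards with v
        simp [Circle.smul_def, norm_mul, Circle.norm_coe]
    have h2 := integral_im (𝕜 := ℂ) hint
    rw [show RCLike.im (∫ (v : ℝ), 𝐞 (-(v * w)) • ((g v : ℂ))) = (∫ (v : ℝ), 𝐞 (-(v * w)) • ((g v : ℂ))).im from rfl] at h2
    rw [← h2]
    congr 1; funext v
    rw [show RCLike.im (𝐞 (-(v * w)) • ((g v : ℂ))) = (𝐞 (-(v * w)) • ((g v : ℂ))).im from rfl]
    rw [Circle.smul_def, Real.fourierChar_apply, smul_eq_mul, Complex.mul_im,
      Complex.exp_ofReal_mul_I_im, Complex.exp_ofReal_mul_I_re]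
    simp [mul_comm]
  have hcomp : Tendsto (fun N : ℕ => -((N:ℝ) / Real.pi)) atTop (Filter.cocompact ℝ) := by
    rw [cocompact_eq_atBot_atTop]
    refine Tendsto.mono_right ?_ le_sup_left
    exact tendsto_neg_atTop_atBot.comp (tendsto_natCast_atTop_atTop.atTop_div_const Real.pi_pos)
  have := (Complex.continuous_im.tendsto 0).comp (key.comp hcomp)
  simp only [Complex.zero_im, Function.comp_def] at this
  refine this.congr fun N => ?_
  rw [him]
  congr 1; funext v
  congr 2
  have hpi := Real.pi_ne_zero
  field_simp

lemma rpow_neg_three_halves {s : ℝ} (hs : 1 ≤ s) :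
    s ^ (-(3:ℝ)/2) = 1 / (s * Real.sqrt s) := by
  have hs0 : (0:ℝ) < s := lt_of_lt_of_le one_pos hs
  rw [show (-(3:ℝ)/2) = -(3/2) by ring, Real.rpow_neg hs0.le,
    show ((3:ℝ)/2) = 1 + 1/2 by ring, Real.rpow_add hs0, Real.rpow_one,
    ← Real.sqrt_eq_rpow, one_div]

/-- Key quantitative estimate: `|s·y₀(s)·y₁(s) + cos(2s)/π| ≤ K/s` for `s ≥ 1`. -/
lemma key_est (C : ℝ) (hC : 0 < C) (y₀ y₁ : ℝ → ℝ)
    (h0 : ∀ s : ℝ, 1 ≤ s →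
      |y₀ s - Real.sqrt (2 / (Real.pi * s)) * Real.cos (s - Real.pi / 4)|
        ≤ C * s ^ (-(3:ℝ)/2))
    (h1 : ∀ s : ℝ, 1 ≤ s →
      |y₁ s - Real.sqrt (2 / (Real.pi * s)) * Real.sin (s - Real.pi / 4)|
        ≤ C * s ^ (-(3:ℝ)/2))
    (s : ℝ) (hs : 1 ≤ s) :
    |s * (y₀ s * y₁ s) + (1/Real.pi) * Real.cos (2*s)|
      ≤ (2*C*Real.sqrt (2/Real.pi) + C^2)/s := by
  have hs0 : (0:ℝ) < s := lt_of_lt_of_le one_pos hs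
  have hss : Real.sqrt s * Real.sqrt s = s := Real.mul_self_sqrt hs0.le
  have hs1 : 1 ≤ Real.sqrt s := by
    rw [show (1:ℝ) = Real.sqrt 1 by simp]; exact Real.sqrt_le_sqrt hs
  have hsq0 : 0 < Real.sqrt s := lt_of_lt_of_le one_pos hs1
  set a := Real.sqrt (2 / (Real.pi * s)) with ha_def
  set q := Real.sqrt (2 / Real.pi) with hq_def
  set φ := s - Real.pi / 4 with hφ_def
  have ha0 : 0 ≤ a := Real.sqrt_nonneg _
  have hq0 : 0 ≤ q := Real.sqrt_nonneg _
  have ha' : a = q / Real.sqrt s := by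
    rw [ha_def, hq_def, show 2 / (Real.pi * s) = (2 / Real.pi) / s by rw [div_div],
      Real.sqrt_div (by positivity) s]
  have haq : a * Real.sqrt s = q := by
    rw [ha']; field_simp
  have ha2 : a ^ 2 = 2 / (Real.pi * s) := Real.sq_sqrt (by positivity)
  set e₀ := y₀ s - a * Real.cos φ with he₀_def
  set e₁ := y₁ s - a * Real.sin φ with he₁_def
  have he₀ : |e₀| * (s * Real.sqrt s) ≤ C := by
    have := h0 s hs
    rw [rpow_neg_three_halves hs] at this
    calc |e₀| * (s * Real.sqrt s) ≤ (C * (1 / (s * Real.sqrt s))) * (s * Real.sqrt s) := by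
          apply mul_le_mul_of_nonneg_right this (by positivity)
      _ = C := by field_simp
  have he₁ : |e₁| * (s * Real.sqrt s) ≤ C := by
    have := h1 s hs
    rw [rpow_neg_three_halves hs] at this
    calc |e₁| * (s * Real.sqrt s) ≤ (C * (1 / (s * Real.sqrt s))) * (s * Real.sqrt s) := by
          apply mul_le_mul_of_nonneg_right this (by positivity)
      _ = C := by field_simp
  have hcancel : s * (y₀ s * y₁ s) + (1/Real.pi) * Real.cos (2*s)
      = s * (a * Real.cos φ * e₁ + a * Real.sin φ * e₀ + e₀ * e₁) := by
    have h2φ : Real.sin (2*φ) = -Real.cos (2*s) := by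
      rw [show 2*φ = 2*s - Real.pi/2 by rw [hφ_def]; ring]
      exact Real.sin_sub_pi_div_two _
    have hsa : s * a ^ 2 = 2 / Real.pi := by
      rw [ha2]; field_simp
    have hsin2 : Real.sin (2*φ) = 2 * (Real.sin φ * Real.cos φ) := by
      rw [Real.sin_two_mul]; ring
    have hπ : Real.pi ≠ 0 := Real.pi_ne_zero
    have hy₀ : y₀ s = a * Real.cos φ + e₀ := by rw [he₀_def]; ring
    have hy₁ : y₁ s = a * Real.sin φ + e₁ := by rw [he₁_def]; ring
    rw [hy₀, hy₁]
    have hcs : Real.cos (2*s) = -(2 * (Real.sin φ * Real.cos φ)) := by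
      rw [← hsin2, h2φ]; ring
    rw [hcs]
    linear_combination (Real.cos φ * Real.sin φ) * hsa
  rw [hcancel]
  have habs : |s * (a * Real.cos φ * e₁ + a * Real.sin φ * e₀ + e₀ * e₁)|
      ≤ s * (a * |e₁| + a * |e₀| + |e₀| * |e₁|) := by
    rw [abs_mul, abs_of_pos hs0]
    apply mul_le_mul_of_nonneg_left _ hs0.le
    calc |a * Real.cos φ * e₁ + a * Real.sin φ * e₀ + e₀ * e₁|
        ≤ |a * Real.cos φ * e₁| + |a * Real.sin φ * e₀| + |e₀ * e₁| := by
          exact (abs_add_le _ _).trans (add_le_add_left (abs_add_le _ _) _)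
      _ ≤ a * |e₁| + a * |e₀| + |e₀| * |e₁| := by
          simp only [abs_mul, abs_of_nonneg ha0]
          have h1 : |Real.cos φ| ≤ 1 := Real.abs_cos_le_one φ
          have h2 : |Real.sin φ| ≤ 1 := Real.abs_sin_le_one φ
          have t1 : a * |Real.cos φ| * |e₁| ≤ a * |e₁| := by
            calc a * |Real.cos φ| * |e₁| ≤ a * 1 * |e₁| :=
                  mul_le_mul_of_nonneg_right (mul_le_mul_of_nonneg_left h1 ha0) (abs_nonneg e₁)
              _ = a * |e₁| := by ring
          have t2 : a * |Real.sin φ| * |e₀| ≤ a * |e₀| := by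
            calc a * |Real.sin φ| * |e₀| ≤ a * 1 * |e₀| :=
                  mul_le_mul_of_nonneg_right (mul_le_mul_of_nonneg_left h2 ha0) (abs_nonneg e₀)
              _ = a * |e₀| := by ring
          linarith
  refine habs.trans ?_
  rw [le_div_iff₀ hs0]
  have key1 : s * (a * |e₁|) * s ≤ C * q := by
    have : s * (a * |e₁|) * s = (a * Real.sqrt s) * (|e₁| * (s * Real.sqrt s)) := by
      linear_combination (-(a * |e₁| * s)) * hss
    rw [this, haq]
    calc q * (|e₁| * (s * Real.sqrt s)) ≤ q * C := by
          apply mul_le_mul_of_nonneg_left he₁ hq0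
      _ = C * q := by ring
  have key2 : s * (a * |e₀|) * s ≤ C * q := by
    have : s * (a * |e₀|) * s = (a * Real.sqrt s) * (|e₀| * (s * Real.sqrt s)) := by
      linear_combination (-(a * |e₀| * s)) * hss
    rw [this, haq]
    calc q * (|e₀| * (s * Real.sqrt s)) ≤ q * C := by
          apply mul_le_mul_of_nonneg_left he₀ hq0
      _ = C * q := by ring
  have key3 : s * (|e₀| * |e₁|) * s ≤ C ^ 2 := by
    have h := mul_le_mul he₀ he₁ (by positivity) hC.le
    have hexp : (|e₀| * (s * Real.sqrt s)) * (|e₁| * (s * Real.sqrt s))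
        = (s * (|e₀| * |e₁|) * s) * (Real.sqrt s * Real.sqrt s) := by ring
    rw [hexp, hss] at h
    have hnn : 0 ≤ s * (|e₀| * |e₁|) * s := by positivity
    nlinarith [h, mul_nonneg hnn (sub_nonneg.mpr hs)]
  have expand : s * (a * |e₁| + a * |e₀| + |e₀| * |e₁|) * s
      = s * (a * |e₁|) * s + s * (a * |e₀|) * s + s * (|e₀| * |e₁|) * s := by ring
  rw [expand]
  linarith

lemma deriv_tau (A : ℝ) (y₀ y₁ : ℝ → ℝ) (hy₀ : ∀ s > (0:ℝ), HasDerivAt y₀ (-y₁ s) s)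
    (N : ℕ) (hN : 1 ≤ N) (τ θ : ℝ) :
    deriv (fun t : ℝ => P_N A y₀ N t θ) τ
      = (A / Real.sqrt N) * (((N:ℝ) * Real.exp (-τ)) * y₁ ((N:ℝ) * Real.exp (-τ)))
        * Real.sin ((N:ℝ) * θ) := by
  have hNpos : (0:ℝ) < N := by exact_mod_cast hN
  have hs : (0:ℝ) < (N:ℝ) * Real.exp (-τ) := mul_pos hNpos (Real.exp_pos _)
  have h1 : HasDerivAt (fun t : ℝ => (N:ℝ) * Real.exp (-t))
      ((N:ℝ) * (Real.exp (-τ) * (-1))) τ :=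
    ((Real.hasDerivAt_exp (-τ)).comp τ ((hasDerivAt_id τ).neg)).const_mul _
  have h2 := (hy₀ _ hs).comp τ h1
  have h3 := (h2.const_mul (A / Real.sqrt N)).mul_const (Real.sin ((N:ℝ) * θ))
  have h4 : deriv (fun t : ℝ => P_N A y₀ N t θ)  τ
      = A / Real.sqrt N * (-y₁ ((N:ℝ) * Real.exp (-τ)) * ((N:ℝ) * (Real.exp (-τ) * -1)))
        * Real.sin ((N:ℝ) * θ) := by
    apply HasDerivAt.deriv
    exact h3
  rw [h4]; ring

lemma deriv_theta (A : ℝ) (y₀ : ℝ → ℝ) (N : ℕ) (τ θ : ℝ) :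
    deriv (fun s : ℝ => P_N A y₀ N τ s) θ
      = (A / Real.sqrt N) * y₀ ((N:ℝ) * Real.exp (-τ)) * ((N:ℝ) * Real.cos ((N:ℝ) * θ)) := by
  have h1 : HasDerivAt (fun s : ℝ => (N:ℝ) * s) ((N:ℝ)) θ := by
    simpa using (hasDerivAt_id θ).const_mul (N:ℝ)
  have h2 := (Real.hasDerivAt_sin ((N:ℝ) * θ)).comp θ h1
  have h3 := h2.const_mul (A / Real.sqrt N * y₀ ((N:ℝ) * Real.exp (-τ)))
  have h4 : deriv (fun s : ℝ => P_N A y₀ N τ s) θ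
      = A / Real.sqrt N * y₀ ((N:ℝ) * Real.exp (-τ)) * (Real.cos ((N:ℝ) * θ) * (N:ℝ)) := by
    apply HasDerivAt.deriv
    exact h3
  rw [h4]; ring

end Helpers

set_option maxHeartbeats 2000000

/-- Under the standard large-argument Bessel asymptotics for `y₀, y₁`
(and `y₀′ = −y₁`), the weak limit of the cross product `(∂_τ P_N)(∂_θ P_N)` vanishes:
for every continuous compactly supported `f : ℝ² → ℝ`,
`∬ f·(∂P_N/∂τ)·(∂P_N/∂θ) → 0` as `N → ∞`. -/
theorem wlim_cross_derivs_P_N (A C : ℝ) (hA : 0 < A) (hC : 0 < C) (y₀ y₁ : ℝ → ℝ)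
    (hy₀ : ∀ s > (0:ℝ), HasDerivAt y₀ (-y₁ s) s)
    (h0 : ∀ s : ℝ, 1 ≤ s →
      |y₀ s - Real.sqrt (2 / (Real.pi * s)) * Real.cos (s - Real.pi / 4)|
        ≤ C * s ^ (-(3:ℝ)/2))
    (h1 : ∀ s : ℝ, 1 ≤ s →
      |y₁ s - Real.sqrt (2 / (Real.pi * s)) * Real.sin (s - Real.pi / 4)|
        ≤ C * s ^ (-(3:ℝ)/2))
    (f : ℝ × ℝ → ℝ) (hf : Continuous f) (hsupp : HasCompactSupport f) :
    Tendsto (fun N : ℕ =>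
        ∫ p : ℝ × ℝ, f p * (deriv (fun t : ℝ => P_N A y₀ N t p.2) p.1)
          * (deriv (fun s : ℝ => P_N A y₀ N p.1 s) p.2))
      atTop (nhds 0) := by
  classical
  -- notation
  set K : ℝ := 2*C*Real.sqrt (2/Real.pi) + C^2 with hK_def
  have hK0 : 0 < K := by positivity
  obtain ⟨r, hr⟩ := hsupp.isBounded.subset_closedBall (0 : ℝ × ℝ)
  have hfint : Integrable f := hf.integrable_of_hasCompactSupport hsupp
  -- the main (oscillatory) term
  set M : ℕ → ℝ × ℝ → ℝ := fun N p =>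
    (A^2 * (-(1/(2*Real.pi))) * Real.cos (2*((N:ℝ)*Real.exp (-p.1)))
      * Real.sin (2*(N:ℝ)*p.2)) * f p with hM_def
  -- the exact integrand (for N ≥ 1)
  set G : ℕ → ℝ × ℝ → ℝ := fun N p =>
    f p * (A^2 * (((N:ℝ)*Real.exp (-p.1)) * (y₀ ((N:ℝ)*Real.exp (-p.1)) * y₁ ((N:ℝ)*Real.exp (-p.1))))
      * (Real.sin ((N:ℝ)*p.2) * Real.cos ((N:ℝ)*p.2))) with hG_def
  -- continuity and integrability of M
  have hMcont : ∀ N : ℕ, Continuous (M N) := by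
    intro N; apply Continuous.mul _ hf; fun_prop
  have hMsupp : ∀ N : ℕ, HasCompactSupport (M N) := by
    intro N
    apply HasCompactSupport.intro hsupp
    intro p hp
    simp [hM_def, image_eq_zero_of_notMem_tsupport hp]
  have hMint : ∀ N : ℕ, Integrable (M N) := fun N =>
    (hMcont N).integrable_of_hasCompactSupport (hMsupp N)
  -- the original integrand equals G N for N ≥ 1
  have horig : ∀ N : ℕ, 1 ≤ N → ∀ p : ℝ × ℝ,
      f p * (deriv (fun t : ℝ => P_N A y₀ N t p.2) p.1)
        * (deriv (fun s : ℝ => P_N A y₀ N p.1 s) p.2) = G N p := by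
    intro N hN p
    rw [deriv_tau A y₀ y₁ hy₀ N hN p.1 p.2, deriv_theta A y₀ N p.1 p.2]
    have hNpos : (0:ℝ) < N := by exact_mod_cast hN
    have hsq : Real.sqrt N * Real.sqrt N = (N:ℝ) := Real.mul_self_sqrt hNpos.le
    have hsqne : Real.sqrt N ≠ 0 := by positivity
    rw [hG_def]
    field_simp
    ring_nf
    rw [Real.sq_sqrt hNpos.le]; ring
  -- pointwise bound on `G - M` on the support, for `N ≥ e^r`
  have hGM : ∀ N : ℕ, Real.exp r ≤ (N:ℝ) → ∀ p : ℝ × ℝ,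
      |G N p - M N p| ≤ (A^2 * K * Real.exp r / N) * |f p| := by
    intro N hNr p
    have hNpos : (0:ℝ) < N := lt_of_lt_of_le (Real.exp_pos r) hNr
    by_cases hp : p ∈ tsupport f
    · have hp1 : |p.1| ≤ r := by
        have h := hr hp
        rw [Metric.mem_closedBall, dist_zero_right] at h
        calc |p.1| = ‖p.1‖ := (Real.norm_eq_abs _).symm
          _ ≤ ‖p‖ := norm_fst_le p
          _ ≤ r := h
      set s := (N:ℝ) * Real.exp (-p.1) with hs_def
      have hexple : Real.exp (-r) ≤ Real.exp (-p.1) :=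
        Real.exp_le_exp.mpr (by linarith [(abs_le.mp hp1).2])
      have hs1 : 1 ≤ s := by
        calc (1:ℝ) = Real.exp r * Real.exp (-r) := by rw [← Real.exp_add]; simp
          _ ≤ (N:ℝ) * Real.exp (-p.1) :=
              mul_le_mul hNr hexple (Real.exp_pos _).le (Nat.cast_nonneg N)
      have hkey := key_est C hC y₀ y₁ h0 h1 s hs1
      have hsin2 : Real.sin (2*(N:ℝ)*p.2)
          = 2 * (Real.sin ((N:ℝ)*p.2) * Real.cos ((N:ℝ)*p.2)) := by
        rw [show 2*(N:ℝ)*p.2 = 2*((N:ℝ)*p.2) by ring, Real.sin_two_mul]; ring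
      have hdiff : G N p - M N p
          = f p * (A^2 * (s * (y₀ s * y₁ s) + (1/Real.pi) * Real.cos (2*s))
              * (Real.sin ((N:ℝ)*p.2) * Real.cos ((N:ℝ)*p.2))) := by
        rw [hG_def, hM_def]
        simp only
        rw [hsin2, hs_def]
        ring
      have hsN : (N:ℝ) * Real.exp (-r) ≤ s := by
        rw [hs_def]
        exact mul_le_mul_of_nonneg_left hexple (Nat.cast_nonneg N)
      have hsposN : (0:ℝ) < (N:ℝ) * Real.exp (-r) := by positivity
      have hKs : K / s ≤ K * Real.exp r / N := by
        calc K/s ≤ K/((N:ℝ)*Real.exp (-r)) :=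
              div_le_div_of_nonneg_left hK0.le hsposN hsN
          _ = K * Real.exp r / N := by
              rw [Real.exp_neg]; field_simp
      have hS : |Real.sin ((N:ℝ)*p.2) * Real.cos ((N:ℝ)*p.2)| ≤ 1 := by
        rw [abs_mul]
        exact mul_le_one₀ (Real.abs_sin_le_one _) (abs_nonneg _) (Real.abs_cos_le_one _)
      calc |G N p - M N p|
          = |f p| * (A^2 * |s * (y₀ s * y₁ s) + (1/Real.pi) * Real.cos (2*s)|
              * |Real.sin ((N:ℝ)*p.2) * Real.cos ((N:ℝ)*p.2)|) := by
            rw [hdiff, abs_mul, abs_mul, abs_mul, abs_of_nonneg (sq_nonneg A)]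
        _ ≤ |f p| * (A^2 * (K * Real.exp r / N) * 1) := by
            gcongr
            exact hkey.trans hKs
        _ = (A^2 * K * Real.exp r / N) * |f p| := by ring
    · have hfp : f p = 0 := image_eq_zero_of_notMem_tsupport hp
      simp [hG_def, hM_def, hfp]
  -- measurability of G N
  have hGmeas : ∀ N : ℕ, 1 ≤ N → AEStronglyMeasurable (G N) volume := by
    intro N hN
    have hNpos : (0:ℝ) < N := by exact_mod_cast hN
    have hy₀c : Continuous (fun p : ℝ × ℝ => y₀ ((N:ℝ) * Real.exp (-p.1))) := by
      rw [continuous_iff_continuousAt]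
      intro p
      have hpos : (0:ℝ) < (N:ℝ) * Real.exp (-p.1) := by positivity
      have hin : ContinuousAt (fun p : ℝ×ℝ => (N:ℝ) * Real.exp (-p.1)) p :=
        (by fun_prop : Continuous fun p : ℝ×ℝ => (N:ℝ) * Real.exp (-p.1)).continuousAt
      exact ContinuousAt.comp (g := y₀) ((hy₀ _ hpos).differentiableAt.continuousAt) hin
    have hy₁m : Measurable (fun p : ℝ × ℝ => y₁ ((N:ℝ) * Real.exp (-p.1))) := by
      have heq : (fun p : ℝ × ℝ => y₁ ((N:ℝ) * Real.exp (-p.1)))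
          = fun p => -(deriv y₀ ((N:ℝ) * Real.exp (-p.1))) := by
        funext p
        have hpos : (0:ℝ) < (N:ℝ) * Real.exp (-p.1) := by positivity
        rw [(hy₀ _ hpos).deriv]; ring
      rw [heq]
      exact ((measurable_deriv y₀).comp
        (by fun_prop : Measurable fun p : ℝ×ℝ => (N:ℝ)*Real.exp (-p.1))).neg
    refine Measurable.aestronglyMeasurable ?_
    refine hf.measurable.mul (Measurable.mul (Measurable.mul measurable_const ?_) ?_)
    · exact (by fun_prop : Measurable fun p : ℝ×ℝ => (N:ℝ)*Real.exp (-p.1)).mul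
        (hy₀c.measurable.mul hy₁m)
    · fun_prop
  -- integrability of G - M and of G
  have hdiffint : ∀ N : ℕ, Real.exp r ≤ (N:ℝ) → 1 ≤ N →
      Integrable (fun p => G N p - M N p) := by
    intro N h1N h2N
    refine Integrable.mono' ((hfint.norm).const_mul (A^2*K*Real.exp r/N)) ?_ ?_
    · exact ((hGmeas N h2N).sub (hMint N).1)
    · filter_upwards with p
      rw [Real.norm_eq_abs]
      simpa [Real.norm_eq_abs] using hGM N h1N p
  have hGint : ∀ N : ℕ, Real.exp r ≤ (N:ℝ) → 1 ≤ N → Integrable (G N) := by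
    intro N h1N h2N
    have hGeq : G N = (fun p => G N p - M N p) + M N := by
      funext p; simp
    rw [hGeq]
    exact (hdiffint N h1N h2N).add (hMint N)
  -- slices of f are integrable
  have hslice : ∀ τ : ℝ, Integrable (fun θ => f (τ, θ)) := by
    intro τ
    apply Continuous.integrable_of_hasCompactSupport
      (by fun_prop : Continuous fun θ : ℝ => f (τ, θ))
    apply HasCompactSupport.intro (hsupp.image continuous_snd)
    intro θ hθ
    by_contra h
    exact hθ ⟨(τ, θ), subset_tsupport f h, rfl⟩
  have hslice2 : ∀ (τ : ℝ) (N : ℕ),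
      Integrable (fun θ => f (τ, θ) * Real.sin (2*(N:ℝ)*θ)) := by
    intro τ N
    apply Continuous.integrable_of_hasCompactSupport
      (by fun_prop : Continuous fun θ : ℝ => f (τ, θ) * Real.sin (2*(N:ℝ)*θ))
    apply HasCompactSupport.intro (hsupp.image continuous_snd)
    intro θ hθ
    by_contra h
    have hfθ : f (τ, θ) ≠ 0 := by
      intro h0'; apply h; simp [Function.comp, h0']
    exact hθ ⟨(τ, θ), subset_tsupport f hfθ, rfl⟩
  -- main oscillatory term tends to zero
  have hmain : Tendsto (fun N : ℕ => ∫ p : ℝ×ℝ, M N p) atTop (nhds 0) := by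
    have hMrw : ∀ N : ℕ, ∫ p : ℝ×ℝ, M N p
        = (A^2 * (-(1/(2*Real.pi)))) * ∫ τ : ℝ,
            Real.cos (2*((N:ℝ)*Real.exp (-τ))) * ∫ θ : ℝ, f (τ, θ) * Real.sin (2*(N:ℝ)*θ) := by
      intro N
      have hDcont : Continuous (fun p : ℝ×ℝ =>
          Real.cos (2*((N:ℝ)*Real.exp (-p.1))) * (f p * Real.sin (2*(N:ℝ)*p.2))) := by
        fun_prop
      have hDsupp : HasCompactSupport (fun p : ℝ×ℝ =>
          Real.cos (2*((N:ℝ)*Real.exp (-p.1))) * (f p * Real.sin (2*(N:ℝ)*p.2))) := by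
        apply HasCompactSupport.intro hsupp
        intro p hp
        simp [image_eq_zero_of_notMem_tsupport hp]
      have hDint : Integrable (fun p : ℝ×ℝ =>
          Real.cos (2*((N:ℝ)*Real.exp (-p.1))) * (f p * Real.sin (2*(N:ℝ)*p.2))) volume :=
        hDcont.integrable_of_hasCompactSupport hDsupp
      have step1 : ∫ p : ℝ×ℝ, M N p
          = (A^2 * (-(1/(2*Real.pi)))) * ∫ p : ℝ×ℝ,
              Real.cos (2*((N:ℝ)*Real.exp (-p.1))) * (f p * Real.sin (2*(N:ℝ)*p.2)) := by
        have e1 : ∫ p : ℝ×ℝ, M N p = ∫ p : ℝ×ℝ, (A^2 * (-(1/(2*Real.pi)))) *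
            (Real.cos (2*((N:ℝ)*Real.exp (-p.1))) * (f p * Real.sin (2*(N:ℝ)*p.2))) := by
          congr 1; funext p
          rw [hM_def]; ring
        rw [e1]
        exact MeasureTheory.integral_const_mul _ _
      rw [step1]
      congr 1
      have hfub : ∫ p : ℝ×ℝ,
          Real.cos (2*((N:ℝ)*Real.exp (-p.1))) * (f p * Real.sin (2*(N:ℝ)*p.2))
          = ∫ τ : ℝ, ∫ θ : ℝ,
              Real.cos (2*((N:ℝ)*Real.exp (-τ))) * (f (τ, θ) * Real.sin (2*(N:ℝ)*θ)) :=
        MeasureTheory.integral_prod _ hDint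
      rw [hfub]
      congr 1; funext τ
      exact MeasureTheory.integral_const_mul _ _
    have hDC : Tendsto (fun N : ℕ => ∫ τ : ℝ,
        Real.cos (2*((N:ℝ)*Real.exp (-τ))) * ∫ θ : ℝ, f (τ, θ) * Real.sin (2*(N:ℝ)*θ))
        atTop (nhds 0) := by
      have hfprod : Integrable f ((volume : Measure ℝ).prod volume) := by
        rwa [← MeasureTheory.Measure.volume_eq_prod]
      have h0' : (0:ℝ) = ∫ (_ : ℝ), (0:ℝ) := by simp
      rw [h0']
      apply MeasureTheory.tendsto_integral_of_dominated_convergence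
        (fun τ => ∫ θ : ℝ, ‖f (τ, θ)‖)
      · intro N
        apply AEStronglyMeasurable.mul
        · exact (by fun_prop : Continuous fun τ : ℝ =>
            Real.cos (2*((N:ℝ)*Real.exp (-τ)))).aestronglyMeasurable
        · have hc : Continuous (fun p : ℝ × ℝ => f p * Real.sin (2*(N:ℝ)*p.2)) := by fun_prop
          exact (hc.aestronglyMeasurable
            (μ := (volume : Measure ℝ).prod volume)).integral_prod_right'
      · exact hfprod.integral_norm_prod_left
      · intro N
        filter_upwards with τ
        rw [norm_mul]
        calc ‖Real.cos (2*((N:ℝ)*Real.exp (-τ)))‖ * ‖∫ θ : ℝ, f (τ, θ) * Real.sin (2*(N:ℝ)*θ)‖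
            ≤ 1 * ‖∫ θ : ℝ, f (τ, θ) * Real.sin (2*(N:ℝ)*θ)‖ := by
              gcongr
              rw [Real.norm_eq_abs]; exact Real.abs_cos_le_one _
          _ = ‖∫ θ : ℝ, f (τ, θ) * Real.sin (2*(N:ℝ)*θ)‖ := one_mul _
          _ ≤ ∫ θ : ℝ, ‖f (τ, θ) * Real.sin (2*(N:ℝ)*θ)‖ :=
              norm_integral_le_integral_norm _
          _ ≤ ∫ θ : ℝ, ‖f (τ, θ)‖ := by
              apply integral_mono ((hslice2 τ N).norm) ((hslice τ).norm)
              intro θ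
              show ‖f (τ, θ) * Real.sin (2*(N:ℝ)*θ)‖ ≤ ‖f (τ, θ)‖
              rw [norm_mul]
              calc ‖f (τ, θ)‖ * ‖Real.sin (2*(N:ℝ)*θ)‖ ≤ ‖f (τ, θ)‖ * 1 := by
                    gcongr
                    rw [Real.norm_eq_abs]; exact Real.abs_sin_le_one _
                _ = ‖f (τ, θ)‖ := mul_one _
      · filter_upwards with τ
        apply squeeze_zero_norm
          (a := fun N : ℕ => ‖∫ θ : ℝ, f (τ, θ) * Real.sin (2*(N:ℝ)*θ)‖)
        · intro N
          rw [norm_mul]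
          calc ‖Real.cos (2*((N:ℝ)*Real.exp (-τ)))‖ * ‖∫ θ : ℝ, f (τ, θ) * Real.sin (2*(N:ℝ)*θ)‖
              ≤ 1 * ‖∫ θ : ℝ, f (τ, θ) * Real.sin (2*(N:ℝ)*θ)‖ := by
                gcongr
                rw [Real.norm_eq_abs]; exact Real.abs_cos_le_one _
            _ = ‖∫ θ : ℝ, f (τ, θ) * Real.sin (2*(N:ℝ)*θ)‖ := one_mul _
        · simpa using (rl_sin (fun θ => f (τ, θ)) (hslice τ)).norm
    have := hDC.const_mul (A^2 * (-(1/(2*Real.pi))))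
    simp only [mul_zero] at this
    exact Tendsto.congr (fun N => (hMrw N).symm) this
  -- difference term tends to zero
  have hdiffto : Tendsto (fun N : ℕ =>
      (∫ p : ℝ × ℝ, f p * (deriv (fun t : ℝ => P_N A y₀ N t p.2) p.1)
          * (deriv (fun s : ℝ => P_N A y₀ N p.1 s) p.2)) - ∫ p : ℝ×ℝ, M N p)
      atTop (nhds 0) := by
    apply squeeze_zero_norm'
      (a := fun N : ℕ => (A^2*K*Real.exp r * ∫ p : ℝ×ℝ, ‖f p‖) / N)
    · have hev1 : ∀ᶠ N : ℕ in atTop, Real.exp r ≤ (N:ℝ) := by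
        obtain ⟨N₀, hN₀⟩ := exists_nat_ge (Real.exp r)
        filter_upwards [eventually_ge_atTop N₀] with N hN
        exact hN₀.trans (by exact_mod_cast hN)
      filter_upwards [hev1, eventually_ge_atTop 1] with N h1N h2N
      have horig' : (∫ p : ℝ × ℝ, f p * (deriv (fun t : ℝ => P_N A y₀ N t p.2) p.1)
          * (deriv (fun s : ℝ => P_N A y₀ N p.1 s) p.2)) = ∫ p : ℝ×ℝ, G N p :=
        integral_congr_ae (Filter.Eventually.of_forall (horig N h2N))
      rw [horig', ← integral_sub (hGint N h1N h2N) (hMint N)]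
      calc ‖∫ p : ℝ×ℝ, (G N p - M N p)‖
          ≤ ∫ p : ℝ×ℝ, ‖G N p - M N p‖ := norm_integral_le_integral_norm _
        _ ≤ ∫ p : ℝ×ℝ, (A^2*K*Real.exp r/N) * ‖f p‖ := by
            apply integral_mono ((hdiffint N h1N h2N).norm) ((hfint.norm).const_mul _)
            intro p
            show ‖G N p - M N p‖ ≤ (A^2*K*Real.exp r/N) * ‖f p‖
            rw [Real.norm_eq_abs, Real.norm_eq_abs]
            exact hGM N h1N p
        _ = (A^2*K*Real.exp r * ∫ p : ℝ×ℝ, ‖f p‖) / N := by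
            rw [MeasureTheory.integral_const_mul]; ring
    · exact tendsto_const_div_atTop_nhds_zero_nat _
  have hsum := hdiffto.add hmain
  simpa using hsum
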